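/- If r ≤ D(P‖P̄) (with P ≠ P̄ full-support distributions on a finite set), then min over distributions Q with D(Q‖P̄) ≤ r of D(Q‖P) equals sup_{0≤s≤1} (−s·r − φ(s|P‖P̄))/(1−s). -/

import Mathlib

noncomputable def phi {Y : Type*} [Fintype Y] (P Pb : Y → ℝ) (s : ℝ) : ℝ :=
  Real.log (∑ y, Pb y ^ s * P y ^ (1 - s))

noncomputable def Dkl {Y : Type*} [Fintype Y] (P Q : Y → ℝ) : ℝ :=
  ∑ y, P y * Real.log (P y / Q y)

open Real Finset Set Filter Topology

namespace Stmt18Aux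

variable {Y : Type*} [Fintype Y]

/-- Gibbs-type inequality. -/
lemma gibbs (Q M : Y → ℝ) (hQ : ∀ y, 0 ≤ Q y) (hQ1 : ∑ y, Q y = 1)
    (hM : ∀ y, 0 < M y) :
    -Real.log (∑ y, M y) ≤ ∑ y, Q y * Real.log (Q y / M y) := by
  classical
  set t : Finset Y := Finset.univ.filter (fun y => Q y ≠ 0) with ht
  have htQ : ∑ y ∈ t, Q y = 1 := by rw [ht, Finset.sum_filter_ne_zero]; exact hQ1
  have htne : t.Nonempty := by
    by_contra h
    rw [Finset.not_nonempty_iff_eq_empty] at h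
    rw [h, Finset.sum_empty] at htQ; norm_num at htQ
  have hQpos : ∀ y ∈ t, 0 < Q y := by
    intro y hy
    rw [ht, Finset.mem_filter] at hy
    exact lt_of_le_of_ne (hQ y) (Ne.symm hy.2)
  have hsum_eq : ∑ y, Q y * Real.log (Q y / M y) = ∑ y ∈ t, Q y * Real.log (Q y / M y) := by
    rw [ht]
    rw [Finset.sum_filter_of_ne]
    intro y _ hne
    intro h
    apply hne
    rw [h, zero_mul]
  rw [hsum_eq]
  have hjensen := (strictConcaveOn_log_Ioi.concaveOn).le_map_sum
    (t := t) (w := Q) (p := fun y => M y / Q y)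
    (fun y hy => hQ y) htQ
    (fun y hy => div_pos (hM y) (hQpos y hy))
  simp only [smul_eq_mul] at hjensen
  have hpt : ∀ y ∈ t, Q y * (M y / Q y) = M y := by
    intro y hy
    rw [mul_comm, div_mul_cancel₀ _ (hQpos y hy).ne']
  rw [Finset.sum_congr rfl hpt] at hjensen
  have htM : 0 < ∑ y ∈ t, M y := Finset.sum_pos (fun y hy => hM y) htne
  have hle : ∑ y ∈ t, M y ≤ ∑ y, M y :=
    Finset.sum_le_sum_of_subset_of_nonneg (Finset.subset_univ t) (fun y _ _ => (hM y).le)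
  have hlog : Real.log (∑ y ∈ t, M y) ≤ Real.log (∑ y, M y) := Real.log_le_log htM hle
  have hneg : ∀ y ∈ t, Q y * Real.log (M y / Q y) = -(Q y * Real.log (Q y / M y)) := by
    intro y hy
    rw [← inv_div, Real.log_inv]
    ring
  rw [Finset.sum_congr rfl hneg, Finset.sum_neg_distrib] at hjensen
  linarith

lemma dkl_nonneg (Q R : Y → ℝ) (hQ : ∀ y, 0 ≤ Q y) (hQ1 : ∑ y, Q y = 1)
    (hR : ∀ y, 0 < R y) (hR1 : ∑ y, R y = 1) : 0 ≤ Dkl Q R := by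
  have := gibbs Q R hQ hQ1 hR
  rw [hR1, Real.log_one, neg_zero] at this
  exact this


noncomputable def Zf (P Pb : Y → ℝ) (s : ℝ) : ℝ :=
  ∑ y, P y * Real.exp (s * Real.log (Pb y / P y))

noncomputable def Wf (P Pb : Y → ℝ) (s : ℝ) : ℝ :=
  ∑ y, P y * Real.exp (s * Real.log (Pb y / P y)) * Real.log (Pb y / P y)

noncomputable def Qf (P Pb : Y → ℝ) (s : ℝ) (y : Y) : ℝ :=
  P y * Real.exp (s * Real.log (Pb y / P y)) / Zf P Pb s

variable {P Pb : Y → ℝ}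

lemma univ_ne (hP1 : ∑ y, P y = 1) : (Finset.univ : Finset Y).Nonempty := by
  by_contra h
  rw [Finset.not_nonempty_iff_eq_empty] at h
  rw [h, Finset.sum_empty] at hP1; norm_num at hP1

lemma Zpos (hP : ∀ y, 0 < P y) (hP1 : ∑ y, P y = 1) (s : ℝ) : 0 < Zf P Pb s :=
  Finset.sum_pos (fun y _ => mul_pos (hP y) (Real.exp_pos _)) (univ_ne hP1)

lemma Qfpos (hP : ∀ y, 0 < P y) (hP1 : ∑ y, P y = 1) (s : ℝ) (y : Y) : 0 < Qf P Pb s y :=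
  div_pos (mul_pos (hP y) (Real.exp_pos _)) (Zpos hP hP1 s)

lemma Qfsum (hP : ∀ y, 0 < P y) (hP1 : ∑ y, P y = 1) (s : ℝ) : ∑ y, Qf P Pb s y = 1 := by
  have hz := (Zpos (P := P) (Pb := Pb) hP hP1 s).ne'
  simp only [Qf, Zf] at *
  rw [← Finset.sum_div, div_self hz]

lemma phi_eq (hP : ∀ y, 0 < P y) (hPb : ∀ y, 0 < Pb y) (s : ℝ) :
    phi P Pb s = Real.log (Zf P Pb s) := by
  unfold phi Zf
  congr 1
  apply Finset.sum_congr rfl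
  intro y _
  have h2 : P y * Real.exp (s * Real.log (Pb y / P y)) =
      Real.exp (Real.log (P y) + s * (Real.log (Pb y) - Real.log (P y))) := by
    rw [Real.exp_add, Real.exp_log (hP y), Real.log_div (hPb y).ne' (hP y).ne']
  rw [Real.rpow_def_of_pos (hPb y), Real.rpow_def_of_pos (hP y), ← Real.exp_add, h2]
  congr 1
  ring

lemma Zone (hP : ∀ y, 0 < P y) (hPb : ∀ y, 0 < Pb y) (hPb1 : ∑ y, Pb y = 1) :
    Zf P Pb 1 = 1 := by
  unfold Zf
  have hpt : ∀ y : Y, P y * Real.exp (1 * Real.log (Pb y / P y)) = Pb y := by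
    intro y
    rw [one_mul, Real.exp_log (div_pos (hPb y) (hP y)), mul_comm,
      div_mul_cancel₀ _ (hP y).ne']
  rw [Finset.sum_congr rfl (fun y _ => hpt y)]
  exact hPb1

lemma Wone (hP : ∀ y, 0 < P y) (hPb : ∀ y, 0 < Pb y) :
    Wf P Pb 1 = Dkl Pb P := by
  unfold Wf Dkl
  apply Finset.sum_congr rfl
  intro y _
  rw [one_mul, Real.exp_log (div_pos (hPb y) (hP y)), mul_comm (P y),
    div_mul_cancel₀ _ (hP y).ne']

lemma logQf (hP : ∀ y, 0 < P y) (hP1 : ∑ y, P y = 1) (s : ℝ) (y : Y) :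
    Real.log (Qf P Pb s y) =
      Real.log (P y) + s * Real.log (Pb y / P y) - Real.log (Zf P Pb s) := by
  unfold Qf
  rw [Real.log_div (mul_pos (hP y) (Real.exp_pos _)).ne' (Zpos hP hP1 s).ne',
    Real.log_mul (hP y).ne' (Real.exp_pos _).ne', Real.log_exp]

lemma sumQfl (hP : ∀ y, 0 < P y) (hP1 : ∑ y, P y = 1) (s : ℝ) :
    ∑ y, Qf P Pb s y * Real.log (Pb y / P y) = Wf P Pb s / Zf P Pb s := by
  unfold Qf Wf
  rw [Finset.sum_div]
  apply Finset.sum_congr rfl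
  intro y _
  rw [div_mul_eq_mul_div]

lemma dkl_Qf_P (hP : ∀ y, 0 < P y) (hP1 : ∑ y, P y = 1) (s : ℝ) :
    Dkl (Qf P Pb s) P = s * (Wf P Pb s / Zf P Pb s) - Real.log (Zf P Pb s) := by
  have key : ∀ y, Qf P Pb s y * Real.log (Qf P Pb s y / P y) =
      s * (Qf P Pb s y * Real.log (Pb y / P y)) - Real.log (Zf P Pb s) * Qf P Pb s y := by
    intro y
    rw [Real.log_div (Qfpos hP hP1 s y).ne' (hP y).ne', logQf hP hP1]
    ring
  unfold Dkl
  rw [Finset.sum_congr rfl (fun y _ => key y), Finset.sum_sub_distrib,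
    ← Finset.mul_sum, ← Finset.mul_sum, Qfsum hP hP1, sumQfl hP hP1, mul_one]

lemma dkl_Qf_Pb (hP : ∀ y, 0 < P y) (hPb : ∀ y, 0 < Pb y) (hP1 : ∑ y, P y = 1) (s : ℝ) :
    Dkl (Qf P Pb s) Pb = (s - 1) * (Wf P Pb s / Zf P Pb s) - Real.log (Zf P Pb s) := by
  have key : ∀ y, Qf P Pb s y * Real.log (Qf P Pb s y / Pb y) =
      (s - 1) * (Qf P Pb s y * Real.log (Pb y / P y)) - Real.log (Zf P Pb s) * Qf P Pb s y := by
    intro y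
    rw [Real.log_div (Qfpos hP hP1 s y).ne' (hPb y).ne', logQf hP hP1,
      Real.log_div (hPb y).ne' (hP y).ne']
    ring
  unfold Dkl
  rw [Finset.sum_congr rfl (fun y _ => key y), Finset.sum_sub_distrib,
    ← Finset.mul_sum, ← Finset.mul_sum, Qfsum hP hP1, sumQfl hP hP1, mul_one]

lemma key_ineq (hP : ∀ y, 0 < P y) (hPb : ∀ y, 0 < Pb y)
    (Q : Y → ℝ) (hQ : ∀ y, 0 ≤ Q y) (hQ1 : ∑ y, Q y = 1) {s : ℝ} (hs0 : 0 ≤ s) :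
    -(phi P Pb s) ≤ s * Dkl Q Pb + (1 - s) * Dkl Q P := by
  have hM : ∀ y, 0 < Pb y ^ s * P y ^ (1 - s) := fun y =>
    mul_pos (Real.rpow_pos_of_pos (hPb y) _) (Real.rpow_pos_of_pos (hP y) _)
  have hg := gibbs Q (fun y => Pb y ^ s * P y ^ (1 - s)) hQ hQ1 hM
  have hpt : ∀ y, Q y * Real.log (Q y / (Pb y ^ s * P y ^ (1 - s))) =
      s * (Q y * Real.log (Q y / Pb y)) + (1 - s) * (Q y * Real.log (Q y / P y)) := by
    intro y
    rcases eq_or_lt_of_le (hQ y) with h | h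
    · simp [← h]
    · rw [Real.log_div h.ne' (hM y).ne',
        Real.log_mul (Real.rpow_pos_of_pos (hPb y) _).ne' (Real.rpow_pos_of_pos (hP y) _).ne',
        Real.log_rpow (hPb y), Real.log_rpow (hP y),
        Real.log_div h.ne' (hPb y).ne', Real.log_div h.ne' (hP y).ne']
      ring
  rw [Finset.sum_congr rfl (fun y _ => hpt y), Finset.sum_add_distrib,
    ← Finset.mul_sum, ← Finset.mul_sum] at hg
  unfold Dkl
  unfold phi
  exact hg

lemma sup_bound (hP : ∀ y, 0 < P y) (hPb : ∀ y, 0 < Pb y)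
    (hP1 : ∑ y, P y = 1) (hPb1 : ∑ y, Pb y = 1) {r : ℝ}
    (Q : Y → ℝ) (hQ : ∀ y, 0 ≤ Q y) (hQ1 : ∑ y, Q y = 1) (hQr : Dkl Q Pb ≤ r)
    {s : ℝ} (hs0 : 0 ≤ s) (hs1 : s ≤ 1) :
    (-s * r - phi P Pb s) / (1 - s) ≤ Dkl Q P := by
  rcases eq_or_lt_of_le hs1 with h1 | h1
  · rw [h1]
    simp only [sub_self, div_zero]
    exact dkl_nonneg Q P hQ hQ1 hP hP1
  · have hpos : 0 < 1 - s := by linarith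
    rw [div_le_iff₀ hpos]
    have hk := key_ineq hP hPb Q hQ hQ1 hs0
    have hsr : s * Dkl Q Pb ≤ s * r := mul_le_mul_of_nonneg_left hQr hs0
    nlinarith

lemma phi_nonpos (hP : ∀ y, 0 < P y) (hPb : ∀ y, 0 < Pb y)
    (hP1 : ∑ y, P y = 1) (hPb1 : ∑ y, Pb y = 1) {s : ℝ} (hs0 : 0 ≤ s) (hs1 : s ≤ 1) :
    phi P Pb s ≤ 0 := by
  have hpt : ∀ y : Y, Pb y ^ s * P y ^ (1 - s) ≤ s * Pb y + (1 - s) * P y := by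
    intro y
    have := Real.geom_mean_le_arith_mean2_weighted hs0 (by linarith : (0:ℝ) ≤ 1 - s)
      (hPb y).le (hP y).le (by ring)
    linarith
  have hsum : ∑ y, Pb y ^ s * P y ^ (1 - s) ≤ 1 := by
    calc ∑ y, Pb y ^ s * P y ^ (1 - s) ≤ ∑ y, (s * Pb y + (1 - s) * P y) :=
          Finset.sum_le_sum (fun y _ => hpt y)
      _ = 1 := by
          rw [Finset.sum_add_distrib, ← Finset.mul_sum, ← Finset.mul_sum, hP1, hPb1]; ring
  have hsp : (0:ℝ) ≤ ∑ y, Pb y ^ s * P y ^ (1 - s) :=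
    Finset.sum_nonneg fun y _ =>
      (mul_pos (Real.rpow_pos_of_pos (hPb y) _) (Real.rpow_pos_of_pos (hP y) _)).le
  exact Real.log_nonpos hsp hsum

lemma Zcont : Continuous (Zf P Pb) := by
  unfold Zf
  exact continuous_finset_sum _ fun y _ =>
    continuous_const.mul (Real.continuous_exp.comp (continuous_id.mul continuous_const))

lemma Wcont : Continuous (Wf P Pb) := by
  unfold Wf
  exact continuous_finset_sum _ fun y _ =>
    (continuous_const.mul (Real.continuous_exp.comp (continuous_id.mul continuous_const))).mul
      continuous_const

lemma logZcont (hP : ∀ y, 0 < P y) (hP1 : ∑ y, P y = 1) :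
    Continuous (fun s => Real.log (Zf P Pb s)) := by
  rw [continuous_iff_continuousAt]
  intro s
  exact (Real.continuousAt_log (Zpos hP hP1 s).ne').comp Zcont.continuousAt

lemma psi_cont (hP : ∀ y, 0 < P y) (hP1 : ∑ y, P y = 1) :
    Continuous (fun s => (s - 1) * (Wf P Pb s / Zf P Pb s) - Real.log (Zf P Pb s)) :=
  ((continuous_id.sub continuous_const).mul
    (Wcont.div Zcont fun s => (Zpos hP hP1 s).ne')).sub (logZcont hP hP1)

lemma logZ_deriv (hP : ∀ y, 0 < P y) (hPb : ∀ y, 0 < Pb y)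
    (hP1 : ∑ y, P y = 1) (hPb1 : ∑ y, Pb y = 1) :
    HasDerivAt (fun s => Real.log (Zf P Pb s)) (Dkl Pb P) 1 := by
  have hZd : HasDerivAt (Zf P Pb) (Wf P Pb 1) 1 := by
    have h : HasDerivAt (Zf P Pb)
        (∑ y, P y * (Real.exp (1 * Real.log (Pb y / P y)) * Real.log (Pb y / P y))) 1 :=
      HasDerivAt.fun_sum fun y _ =>
        ((hasDerivAt_mul_const (Real.log (Pb y / P y))).exp.const_mul (P y))
    have he : ∑ y, P y * (Real.exp (1 * Real.log (Pb y / P y)) * Real.log (Pb y / P y))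
        = Wf P Pb 1 := by
      unfold Wf
      exact Finset.sum_congr rfl fun y _ => by ring
    rwa [he] at h
  have h := hZd.log (Zpos hP hP1 1).ne'
  rwa [Zone hP hPb hPb1, div_one, Wone hP hPb] at h

end Stmt18Aux

open Stmt18Aux in
/-- Variational/Legendre-dual characterization of the Hoeffding exponent. -/
theorem stmt18 {Y : Type*} [Fintype Y] (P Pb : Y → ℝ)
    (hP : ∀ y, 0 < P y) (hPb : ∀ y, 0 < Pb y)
    (hP1 : ∑ y, P y = 1) (hPb1 : ∑ y, Pb y = 1) (hne : P ≠ Pb)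
    (r : ℝ) (hr : r ≤ Dkl P Pb) :
    sInf {d : ℝ | ∃ Q : Y → ℝ, (∀ y, 0 ≤ Q y) ∧ (∑ y, Q y) = 1 ∧
        Dkl Q Pb ≤ r ∧ d = Dkl Q P} =
      ⨆ s : Set.Icc (0 : ℝ) 1, (-(s : ℝ) * r - phi P Pb (s : ℝ)) / (1 - (s : ℝ)) := by
  classical
  set S : Set ℝ := {d : ℝ | ∃ Q : Y → ℝ, (∀ y, 0 ≤ Q y) ∧ (∑ y, Q y) = 1 ∧
        Dkl Q Pb ≤ r ∧ d = Dkl Q P} with hSdef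
  set G : Set.Icc (0:ℝ) 1 → ℝ :=
    fun s => (-(s : ℝ) * r - phi P Pb (s : ℝ)) / (1 - (s : ℝ)) with hGdef
  rcases lt_or_ge r 0 with hneg | hr0
  · -- case r < 0 : both sides are junk value 0
    have hSe : S = ∅ := by
      ext d
      simp only [hSdef, Set.mem_setOf_eq, Set.mem_empty_iff_false, iff_false]
      rintro ⟨Q, hQ0, hQ1, hQr, rfl⟩
      have := dkl_nonneg Q Pb hQ0 hQ1 hPb hPb1
      linarith
    rw [hSe, Real.sInf_empty]
    rw [Real.iSup_of_not_bddAbove]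
    rintro ⟨M, hM⟩
    obtain ⟨n, hn⟩ := exists_nat_gt (M / (-r))
    have hnn : (0:ℝ) ≤ n := Nat.cast_nonneg n
    have hd : (0:ℝ) < (n:ℝ) + 1 := by positivity
    set s : ℝ := n / (n + 1) with hs
    have hs0 : 0 ≤ s := by positivity
    have hs1 : s ≤ 1 := by rw [hs, div_le_one hd]; linarith
    have h1s : 0 < 1 - s := by rw [hs, sub_pos, div_lt_one hd]; linarith
    have hFs : (n:ℝ) * (-r) ≤ (-s * r - phi P Pb s) / (1 - s) := by
      rw [le_div_iff₀ h1s]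
      have hphi := phi_nonpos hP hPb hP1 hPb1 hs0 hs1
      have hcalc : (n:ℝ) * (-r) * (1 - s) = -s * r := by
        rw [hs]; field_simp; ring
      linarith
    have hM' := hM (Set.mem_range_self (⟨s, hs0, hs1⟩ : Set.Icc (0:ℝ) 1))
    simp only [hGdef] at hM'
    have hlt : M < (n:ℝ) * (-r) := by
      rw [div_lt_iff₀ (neg_pos.mpr hneg)] at hn
      linarith
    linarith
  · -- case 0 ≤ r
    set ψ : ℝ → ℝ :=
      fun s => (s - 1) * (Wf P Pb s / Zf P Pb s) - Real.log (Zf P Pb s) with hψdef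
    have hψcont : Continuous ψ := psi_cont hP hP1
    have hZ0 : Zf P Pb 0 = 1 := by
      unfold Zf; simpa using hP1
    have hW0 : Wf P Pb 0 = -Dkl P Pb := by
      unfold Wf Dkl
      rw [← Finset.sum_neg_distrib]
      apply Finset.sum_congr rfl
      intro y _
      rw [show Pb y / P y = (P y / Pb y)⁻¹ from (inv_div _ _).symm, Real.log_inv]
      simp [Real.exp_zero]
    have hψ1 : ψ 1 = 0 := by
      simp only [hψdef]
      rw [Zone hP hPb hPb1]
      simp
    have hψ0 : ψ 0 = Dkl P Pb := by
      simp only [hψdef]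
      rw [hZ0, hW0]
      simp
    have hrmem : r ∈ Set.Icc (ψ 1) (ψ 0) := by
      rw [hψ1, hψ0]; exact ⟨hr0, hr⟩
    obtain ⟨s₀, hs₀mem, hψs₀⟩ := intermediate_value_Icc' zero_le_one hψcont.continuousOn hrmem
    have hQr : Dkl (Qf P Pb s₀) Pb = r := by
      rw [dkl_Qf_Pb hP hPb hP1]
      exact hψs₀
    have hmemS : Dkl (Qf P Pb s₀) P ∈ S :=
      ⟨Qf P Pb s₀, fun y => (Qfpos hP hP1 s₀ y).le, Qfsum hP hP1 s₀, hQr.le, rfl⟩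
    have hbb : BddBelow S := by
      refine ⟨0, ?_⟩
      rintro d ⟨Q, h0, h1, _, rfl⟩
      exact dkl_nonneg Q P h0 h1 hP hP1
    have hub : ∀ s : Set.Icc (0:ℝ) 1, ∀ Q : Y → ℝ, (∀ y, 0 ≤ Q y) → ∑ y, Q y = 1 →
        Dkl Q Pb ≤ r → G s ≤ Dkl Q P := by
      intro s Q h0 h1 h2
      simp only [hGdef]
      exact sup_bound hP hPb hP1 hPb1 Q h0 h1 h2 s.2.1 s.2.2
    have hbA : BddAbove (Set.range G) := by
      refine ⟨Dkl (Qf P Pb s₀) P, ?_⟩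
      rintro _ ⟨s, rfl⟩
      exact hub s _ (fun y => (Qfpos hP hP1 s₀ y).le) (Qfsum hP hP1 s₀) hQr.le
    have hle : (⨆ s, G s) ≤ sInf S := by
      apply ciSup_le
      intro s
      apply le_csInf ⟨_, hmemS⟩
      rintro d ⟨Q, h0, h1, h2, rfl⟩
      exact hub s Q h0 h1 h2
    refine le_antisymm ?_ hle
    rcases eq_or_lt_of_le hr0 with hre | hrpos
    · -- r = 0
      have hPbPb : Dkl Pb Pb = 0 := by
        unfold Dkl
        have hpt : ∀ y : Y, Pb y * Real.log (Pb y / Pb y) = 0 := fun y => by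
          rw [div_self (hPb y).ne', Real.log_one, mul_zero]
        rw [Finset.sum_congr rfl (fun y _ => hpt y), Finset.sum_const_zero]
      have hPbS : Dkl Pb P ∈ S :=
        ⟨Pb, fun y => (hPb y).le, hPb1, by rw [hPbPb]; linarith, rfl⟩
      refine (csInf_le hbb hPbS).trans ?_
      have hder := logZ_deriv hP hPb hP1 hPb1
      have hslope := hasDerivAt_iff_tendsto_slope.1 hder
      have hmono : 𝓝[<] (1:ℝ) ≤ 𝓝[≠] (1:ℝ) :=
        nhdsWithin_mono _ fun x hx => ne_of_lt hx
      have htend : Tendsto (fun s : ℝ => (-s * r - phi P Pb s) / (1 - s)) (𝓝[<] (1:ℝ))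
          (𝓝 (Dkl Pb P)) := by
        apply Tendsto.congr' _ (hslope.mono_left hmono)
        filter_upwards [self_mem_nhdsWithin] with s hs
        have hs1 : s ≠ 1 := ne_of_lt hs
        have h1s : (1:ℝ) - s ≠ 0 := fun h => hs1 (by linarith)
        have hs1' : s - 1 ≠ 0 := fun h => hs1 (by linarith)
        rw [slope_def_field, phi_eq hP hPb, Zone hP hPb hPb1, Real.log_one, ← hre]
        field_simp
        ring
      refine le_of_tendsto htend ?_
      filter_upwards [Ioo_mem_nhdsLT_of_mem
        (Set.mem_Ioc.mpr ⟨zero_lt_one, le_refl (1:ℝ)⟩)] with s hs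
      exact le_ciSup hbA (⟨s, hs.1.le, hs.2.le⟩ : Set.Icc (0:ℝ) 1)
    · -- 0 < r
      have hs₀1 : s₀ ≠ 1 := by
        intro h
        rw [h, hψ1] at hψs₀
        linarith
      have hs₀lt : s₀ < 1 := lt_of_le_of_ne hs₀mem.2 hs₀1
      have h1s : (1:ℝ) - s₀ ≠ 0 := by
        intro h; exact hs₀1 (by linarith)
      have heq : G ⟨s₀, hs₀mem⟩ = Dkl (Qf P Pb s₀) P := by
        simp only [hGdef]
        rw [phi_eq hP hPb, dkl_Qf_P hP hP1, ← hψs₀]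
        simp only [hψdef]
        field_simp
        ring
      exact (csInf_le hbb hmemS).trans (heq ▸ le_ciSup hbA ⟨s₀, hs₀mem⟩)
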